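/- arXiv:2208.01027 — 2 statements merged into one kernel-verified Lean document; each statement's English description precedes it below -/
import Mathlib

section
/- Let R be a commutative Noetherian reduced algebra over an infinite field k, let I be an ideal of R, and let x ∈ I. Let \overline{R} denote the integral closure of R in its total ring of quotients. If for every maximal ideal m of \overline{R} the extension of \overline{I·\overline{R}_m} to \overline{R}_m/(x)\overline{R}_m equals the integral closure of the extension of I to \overline{R}_m/(x)\overline{R}_m, then the image of \overline{I} in R/(x) equals the integral closure of the image ideal I·(R/(x)). -/
/-- The integral closure of an ideal `I` of a commutative ring `R`: the set of elements
`r ∈ R` satisfying an equation `r ^ n + c 1 * r ^ (n-1) + ⋯ + c n = 0` with `c i ∈ I ^ i`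
(here written as `r ^ n + ∑ i < n, c i * r ^ i = 0` with `c i ∈ I ^ (n - i)`). -/
def Ideal.intClosure {R : Type*} [CommRing R] (I : Ideal R) : Set R :=
  {r | ∃ n : ℕ, 0 < n ∧ ∃ c : ℕ → R, (∀ i < n, c i ∈ I ^ (n - i)) ∧
    r ^ n + ∑ i ∈ Finset.range n, c i * r ^ i = 0}

open Polynomial

section Basic

variable {R : Type*} [CommRing R] (I : Ideal R)

lemma Ideal.mem_intClosure_of_mem {r : R} (h : r ∈ I) : r ∈ I.intClosure := by
  refine ⟨1, one_pos, fun _ => -r, fun i hi => ?_, by simp⟩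
  interval_cases i
  simpa using I.neg_mem h

/-- From a Rees-algebra integrality witness to membership in the integral closure. -/
lemma Ideal.mem_intClosure_of_rees {r : R}
    (h : IsIntegral ↥(reesAlgebra I) (C r * X : R[X])) : r ∈ I.intClosure := by
  by_cases hR : Subsingleton R
  · exact ⟨1, one_pos, 0, fun i _ => zero_mem _, Subsingleton.elim _ _⟩
  have : Nontrivial R := not_subsingleton_iff_nontrivial.mp hR
  obtain ⟨q, mq, hq⟩ := h
  set n := q.natDegree with hn
  have hnpos : 0 < n := by
    rcases Nat.eq_zero_or_pos n with h0 | h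
    · exfalso
      rw [mq.natDegree_eq_zero.mp h0] at hq
      simp at hq
    · exact h
  rw [eval₂_eq_sum_range] at hq
  set c : ℕ → R := fun i => ((q.coeff i : R[X])).coeff (n - i) with hc
  have hterm : ∀ i ∈ Finset.range (n + 1),
      ((algebraMap ↥(reesAlgebra I) R[X]) (q.coeff i) * (C r * X) ^ i).coeff n
        = c i * r ^ i := by
    intro i hi
    have hin : i ≤ n := Nat.lt_succ_iff.mp (Finset.mem_range.mp hi)
    have : (C r * X) ^ i = C (r ^ i) * X ^ i := by
      rw [mul_pow, ← C_pow]
    rw [this, ← mul_assoc, coeff_mul_X_pow', if_pos hin, coeff_mul_C]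
    rfl
  have h0 : (∑ i ∈ Finset.range (n + 1),
      (algebraMap ↥(reesAlgebra I) R[X]) (q.coeff i) * (C r * X) ^ i).coeff n = 0 := by
    rw [hq]; simp
  rw [finset_sum_coeff, Finset.sum_congr rfl hterm, Finset.sum_range_succ] at h0
  have htop : c n * r ^ n = r ^ n := by
    have : q.coeff n = 1 := mq.coeff_natDegree
    rw [hc]
    simp [this]
  refine ⟨n, hnpos, c, fun i _ => ?_, ?_⟩
  · exact (mem_reesAlgebra_iff I _).mp (q.coeff i).2 (n - i)
  · rw [htop] at h0
    linear_combination h0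

/-- From membership in the integral closure to a Rees-algebra integrality witness. -/
lemma Ideal.rees_of_mem_intClosure {r : R} (h : r ∈ I.intClosure) :
    IsIntegral ↥(reesAlgebra I) (C r * X : R[X]) := by
  obtain ⟨n, hn, c, hc, heq⟩ := h
  have hmem : ∀ i < n, C (c i) * X ^ (n - i) ∈ reesAlgebra I := by
    intro i hi
    rw [mem_reesAlgebra_iff]
    intro j
    rw [coeff_C_mul, coeff_X_pow]
    split_ifs with hj
    · rw [mul_one, hj]; exact hc i hi
    · rw [mul_zero]; exact zero_mem _
  classical
  set a : ℕ → ↥(reesAlgebra I) := fun i =>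
    if hi : i < n then ⟨C (c i) * X ^ (n - i), hmem i hi⟩ else 0 with ha
  refine ⟨X ^ n + ∑ i ∈ Finset.range n, Polynomial.C (a i) * X ^ i, ?_, ?_⟩
  · apply monic_X_pow_add
    refine lt_of_le_of_lt (degree_sum_le _ _) ?_
    rw [Finset.sup_lt_iff (by exact_mod_cast WithBot.bot_lt_coe n)]
    intro i hi
    exact lt_of_le_of_lt (degree_C_mul_X_pow_le _ _)
      (by exact_mod_cast Finset.mem_range.mp hi)
  · rw [eval₂_add, eval₂_X_pow, eval₂_finset_sum]
    have hterm : ∀ i ∈ Finset.range n,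
        eval₂ (algebraMap ↥(reesAlgebra I) R[X]) (C r * X) (Polynomial.C (a i) * X ^ i)
          = C (c i * r ^ i) * X ^ n := by
      intro i hi
      have hin : i < n := Finset.mem_range.mp hi
      rw [eval₂_mul, eval₂_C, eval₂_X_pow]
      have hai : ((algebraMap ↥(reesAlgebra I) R[X]) (a i) : R[X]) = C (c i) * X ^ (n - i) := by
        rw [ha]; simp only [dif_pos hin]; rfl
      rw [hai]
      have : (C r * X) ^ i = C (r ^ i) * X ^ i := by rw [mul_pow, ← C_pow]
      rw [this]
      have hX : (X : R[X]) ^ (n - i) * X ^ i = X ^ n := by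
        rw [← pow_add, Nat.sub_add_cancel hin.le]
      calc C (c i) * X ^ (n - i) * (C (r ^ i) * X ^ i)
          = C (c i) * C (r ^ i) * (X ^ (n - i) * X ^ i) := by ring
        _ = C (c i) * C (r ^ i) * X ^ n := by rw [hX]
        _ = C (c i * r ^ i) * X ^ n := by rw [C_mul]
    rw [Finset.sum_congr rfl hterm, ← Finset.sum_mul, ← map_sum]
    have : (C r * X) ^ n = C (r ^ n) * X ^ n := by rw [mul_pow, ← C_pow]
    rw [this, ← add_mul, ← C_add, heq, map_zero, zero_mul]

end Basic

section IdealStructure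

variable {R : Type*} [CommRing R] (I : Ideal R)

lemma Ideal.intClosure_zero_mem : (0 : R) ∈ I.intClosure :=
  I.mem_intClosure_of_mem (zero_mem I)

lemma Ideal.intClosure_add_mem {a b : R} (ha : a ∈ I.intClosure) (hb : b ∈ I.intClosure) :
    a + b ∈ I.intClosure := by
  apply I.mem_intClosure_of_rees
  have : (C (a + b) * X : R[X]) = C a * X + C b * X := by rw [C_add]; ring
  rw [this]
  exact (I.rees_of_mem_intClosure ha).add (I.rees_of_mem_intClosure hb)

lemma Ideal.intClosure_smul_mem (s : R) {a : R} (ha : a ∈ I.intClosure) :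
    s * a ∈ I.intClosure := by
  apply I.mem_intClosure_of_rees
  have h1 : (C (s * a) * X : R[X]) = C s * (C a * X) := by rw [C_mul]; ring
  rw [h1]
  have hCs : IsIntegral ↥(reesAlgebra I) (C s : R[X]) := by
    have hmem : (C s : R[X]) ∈ reesAlgebra I := by
      rw [mem_reesAlgebra_iff]
      intro j
      rw [coeff_C]
      split_ifs with hj
      · rw [hj, pow_zero, Ideal.one_eq_top]; exact Submodule.mem_top
      · exact zero_mem _
    have : (C s : R[X]) = algebraMap ↥(reesAlgebra I) R[X] ⟨C s, hmem⟩ := rfl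
    rw [this]
    exact isIntegral_algebraMap
  exact hCs.mul (I.rees_of_mem_intClosure ha)

/-- The integral closure of an ideal, as an ideal. -/
def Ideal.intClosureIdeal : Ideal R where
  carrier := I.intClosure
  zero_mem' := I.intClosure_zero_mem
  add_mem' := fun ha hb => I.intClosure_add_mem ha hb
  smul_mem' := fun c x ha => by
    simp only [smul_eq_mul]
    exact I.intClosure_smul_mem c ha

@[simp] lemma Ideal.mem_intClosureIdeal_iff {r : R} :
    r ∈ I.intClosureIdeal ↔ r ∈ I.intClosure := Iff.rfl

/-- Persistence of integral closure of ideals under ring maps. -/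
lemma Ideal.intClosure_map {S : Type*} [CommRing S] (f : R →+* S) {r : R}
    (h : r ∈ I.intClosure) : f r ∈ (I.map f).intClosure := by
  obtain ⟨n, hn, c, hc, heq⟩ := h
  refine ⟨n, hn, fun i => f (c i), fun i hi => ?_, ?_⟩
  · rw [← Ideal.map_pow]
    exact Ideal.mem_map_of_mem f (hc i hi)
  · have := congrArg f heq
    simpa [map_add, map_pow, map_sum, map_mul] using this

end IdealStructure

/-- Transitivity for elementwise integrality along ring homs. -/
lemma RingHom.IsIntegralElem.trans_of_isIntegral {A B T : Type*} [CommRing A] [CommRing B]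
    [CommRing T] (f : A →+* B) (g : B →+* T) (hf : f.IsIntegral) {x : T}
    (hx : g.IsIntegralElem x) : (g.comp f).IsIntegralElem x := by
  letI := f.toAlgebra
  letI := g.toAlgebra
  letI := (g.comp f).toAlgebra
  haveI : IsScalarTower A B T := IsScalarTower.of_algebraMap_eq fun _ => rfl
  haveI : Algebra.IsIntegral A B := ⟨hf⟩
  exact isIntegral_trans x hx
section Contract

variable {R S : Type*} [CommRing R] [CommRing S]

/-- Contraction of integral closures of ideals along an injective integral ring map. -/
lemma Ideal.intClosure_contract (f : R →+* S) (hinj : Function.Injective f)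
    (hint : f.IsIntegral) (I : Ideal R) {r : R}
    (hr : f r ∈ (I.map f).intClosure) : r ∈ I.intClosure := by
  apply I.mem_intClosure_of_rees
  set A := reesAlgebra I with hA
  set gA : ↥A →+* S[X] := (Polynomial.mapRingHom f).comp (algebraMap ↥A R[X]) with hgA
  -- the subalgebra map on Rees algebras
  have hmemB : ∀ p : ↥A, Polynomial.map f (p : R[X]) ∈ reesAlgebra (I.map f) := by
    intro p
    rw [mem_reesAlgebra_iff]
    intro j
    rw [Polynomial.coeff_map, ← Ideal.map_pow]
    exact Ideal.mem_map_of_mem f ((mem_reesAlgebra_iff I _).mp p.2 j)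
  set B := reesAlgebra (I.map f) with hB
  set h1 : ↥A →+* ↥B :=
    { toFun := fun p => ⟨Polynomial.map f (p : R[X]), hmemB p⟩
      map_one' := by ext : 1; simp
      map_mul' := fun a b => by ext : 1; push_cast; simp [Polynomial.map_mul]
      map_zero' := by ext : 1; simp
      map_add' := fun a b => by ext : 1; push_cast; simp [Polynomial.map_add] } with hh1
  -- auxiliary algebra structure on S[X] over the Rees algebra of I
  letI : Algebra ↥A S[X] := gA.toAlgebra
  have halgMap : algebraMap ↥A S[X] = gA := rfl
  -- constants of S are integral over A
  have hCs : ∀ s : S, IsIntegral ↥A (C s : S[X]) := by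
    intro s
    obtain ⟨u, mu, hu⟩ := hint s
    set cR : R →+* ↥A :=
      { toFun := fun a => ⟨C a, by
          rw [hA, mem_reesAlgebra_iff]
          intro j
          rw [coeff_C]
          split_ifs with hj
          · rw [hj, pow_zero, Ideal.one_eq_top]; exact Submodule.mem_top
          · exact zero_mem _⟩
        map_one' := by ext : 1; simp
        map_mul' := fun a b => by ext : 1; push_cast; simp
        map_zero' := by ext : 1; simp
        map_add' := fun a b => by ext : 1; push_cast; simp } with hcR
    refine ⟨u.map cR, mu.map _, ?_⟩
    rw [halgMap, eval₂_map]
    have hcomp : gA.comp cR = (Polynomial.C : S →+* S[X]).comp f := by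
      refine RingHom.ext fun a => ?_
      show Polynomial.map f (C a) = C (f a)
      rw [Polynomial.map_C]
    rw [hcomp, ← hom_eval₂, hu, map_zero]
  -- every element of the Rees algebra of I.map f is integral over A
  have hBint : ∀ p : S[X], p ∈ B → IsIntegral ↥A p := by
    intro p hp
    have hrepr : p = ∑ j ∈ Finset.range (p.natDegree + 1), C (p.coeff j) * X ^ j := by
      conv_lhs => rw [p.as_sum_range' (p.natDegree + 1) (Nat.lt_succ_self _)]
      exact Finset.sum_congr rfl fun j _ => (C_mul_X_pow_eq_monomial).symm
    have hterm : ∀ j : ℕ, ∀ a ∈ (I.map f) ^ j, (C a * X ^ j : S[X]) ∈ integralClosure ↥A S[X] := by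
      intro j a ha
      rw [← Ideal.map_pow] at ha
      have ha' : a ∈ Ideal.span (f '' ((I ^ j : Ideal R) : Set R)) := ha
      refine Submodule.span_induction ?_ ?_ ?_ ?_ ha'
      · rintro _ ⟨b, hb, rfl⟩
        have : (C (f b) * X ^ j : S[X]) = algebraMap ↥A S[X]
            ⟨C b * X ^ j, by
              rw [hA, mem_reesAlgebra_iff]
              intro i
              rw [coeff_C_mul, coeff_X_pow]
              split_ifs with hij
              · rw [mul_one, hij]; exact hb
              · rw [mul_zero]; exact zero_mem _⟩ := by
          show (C (f b) * X ^ j : S[X]) = Polynomial.map f (C b * X ^ j)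
          rw [Polynomial.map_mul, Polynomial.map_C, Polynomial.map_pow, Polynomial.map_X]
        rw [this]
        exact Subalgebra.algebraMap_mem _ _
      · simpa using (integralClosure ↥A S[X]).zero_mem
      · intro y z _ _ hy hz
        have : (C (y + z) * X ^ j : S[X]) = C y * X ^ j + C z * X ^ j := by
          rw [C_add]; ring
        rw [this]
        exact add_mem hy hz
      · intro s y _ hy
        have : (C (s • y) * X ^ j : S[X]) = C s * (C y * X ^ j) := by
          rw [smul_eq_mul, C_mul]; ring
        rw [this]
        exact mul_mem (hCs s) hy
    have : p ∈ integralClosure ↥A S[X] := by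
      rw [hrepr]
      exact Subalgebra.sum_mem _ fun j _ => hterm j _ ((mem_reesAlgebra_iff _ _).mp hp j)
    exact this
  -- h1 is an integral ring hom
  have hh1int : h1.IsIntegral := by
    intro b
    obtain ⟨q, mq, hq⟩ := hBint (b : S[X]) b.2
    refine ⟨q, mq, ?_⟩
    have hval : (B.val.toRingHom).comp h1 = gA := by
      ext a
      rfl
    apply Subtype.coe_injective
    have := hom_eval₂ q h1 (B.val.toRingHom) b
    rw [hval] at this
    rw [halgMap] at hq
    calc ((eval₂ h1 b q : ↥B) : S[X]) = eval₂ gA ((b : S[X])) q := this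
      _ = 0 := hq
  -- C (f r) * X is integral over B
  have hx : IsIntegral ↥B (C (f r) * X : S[X]) := (I.map f).rees_of_mem_intClosure hr
  -- transitivity
  have hx2 : gA.IsIntegralElem (C (f r) * X : S[X]) := by
    have hd : ((algebraMap ↥B S[X]).comp h1) = gA := by
      ext a
      rfl
    have := RingHom.IsIntegralElem.trans_of_isIntegral h1 (algebraMap ↥B S[X]) hh1int hx
    rwa [hd] at this
  -- pull the equation back along the injective map
  obtain ⟨q, mq, hq⟩ := hx2
  refine ⟨q, mq, ?_⟩
  apply Polynomial.map_injective f hinj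
  have h3 : (Polynomial.mapRingHom f) (C r * X) = C (f r) * X := by simp
  have h5 : Polynomial.map f (eval₂ (algebraMap ↥A R[X]) (C r * X) q) = 0 := by
    calc Polynomial.map f (eval₂ (algebraMap ↥A R[X]) (C r * X) q)
        = (Polynomial.mapRingHom f) (eval₂ (algebraMap ↥A R[X]) (C r * X) q) := rfl
      _ = eval₂ ((Polynomial.mapRingHom f).comp (algebraMap ↥A R[X]))
            ((Polynomial.mapRingHom f) (C r * X)) q :=
          hom_eval₂ q (algebraMap ↥A R[X]) (Polynomial.mapRingHom f) (C r * X)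
      _ = eval₂ gA (C (f r) * X) q := by rw [h3]
      _ = 0 := hq
  rw [Polynomial.map_zero]
  exact h5

end Contract

section Descent

variable {Rb : Type*} [CommRing Rb]

/-- Clearing denominators: integrality over the localized ideal gives integrality
after multiplying by a suitable element of the submonoid. -/
lemma Ideal.intClosure_clear (J : Ideal Rb) (y : Rb) (M : Submonoid Rb)
    (hy : algebraMap Rb (Localization M) y ∈
      (J.map (algebraMap Rb (Localization M))).intClosure) :
    ∃ t ∈ M, t * y ∈ J.intClosure := by
  classical
  set g := algebraMap Rb (Localization M) with hg
  obtain ⟨n, hn, c, hc, heq⟩ := hy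
  have hch : ∀ i : ℕ, ∃ ds : Rb × Rb,
      i < n → ds.1 ∈ J ^ (n - i) ∧ ds.2 ∈ M ∧ c i * g ds.2 = g ds.1 := by
    intro i
    by_cases hi : i < n
    · have hci := hc i hi
      rw [← Ideal.map_pow] at hci
      obtain ⟨⟨d, s⟩, hds⟩ := (IsLocalization.mem_map_algebraMap_iff M _).mp hci
      exact ⟨((d : Rb), (s : Rb)), fun _ => ⟨d.2, s.2, hds⟩⟩
    · exact ⟨(0, 1), fun hlt => absurd hlt hi⟩
  choose ds hds using hch
  set d : ℕ → Rb := fun i => (ds i).1 with hd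
  set sf : ℕ → Rb := fun i => (ds i).2 with hsf
  set s : Rb := ∏ i ∈ Finset.range n, sf i with hs
  have hsM : s ∈ M := Submonoid.prod_mem M fun i hi => (hds i (Finset.mem_range.mp hi)).2.1
  set e : ℕ → Rb := fun i => d i * (∏ j ∈ (Finset.range n).erase i, sf j) * s ^ (n - 1 - i)
    with he'
  have he : ∀ i < n, e i ∈ J ^ (n - i) := fun i hi =>
    Ideal.mul_mem_right _ _ (Ideal.mul_mem_right _ _ ((hds i hi).1))
  have key : g ((s * y) ^ n + ∑ i ∈ Finset.range n, e i * (s * y) ^ i) = 0 := by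
    have expand : g ((s * y) ^ n + ∑ i ∈ Finset.range n, e i * (s * y) ^ i)
        = g s ^ n * ((g y) ^ n + ∑ i ∈ Finset.range n, c i * (g y) ^ i) := by
      rw [_root_.map_add, _root_.map_pow, _root_.map_mul g s y, mul_pow, _root_.map_sum,
        mul_add, Finset.mul_sum]
      congr 1
      refine Finset.sum_congr rfl fun i hi => ?_
      have hin : i < n := Finset.mem_range.mp hi
      have hsplit : g s = g (sf i) * g (∏ j ∈ (Finset.range n).erase i, sf j) := by
        rw [← _root_.map_mul]
        congr 1
        exact (Finset.mul_prod_erase _ _ hi).symm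
      have hpow : (1 + (n - 1 - i)) + i = n := by omega
      calc g (e i * (s * y) ^ i)
          = (g (d i) * g (∏ j ∈ (Finset.range n).erase i, sf j) * g s ^ (n - 1 - i))
            * (g s ^ i * g y ^ i) := by
            simp only [he', _root_.map_mul, _root_.map_pow, mul_pow]
        _ = ((c i * g (sf i)) * g (∏ j ∈ (Finset.range n).erase i, sf j)
              * g s ^ (n - 1 - i)) * (g s ^ i * g y ^ i) := by
            rw [(hds i hin).2.2]
        _ = c i * ((g (sf i) * g (∏ j ∈ (Finset.range n).erase i, sf j)) ^ 1
              * g s ^ (n - 1 - i) * g s ^ i) * g y ^ i := by ring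
        _ = c i * (g s ^ 1 * g s ^ (n - 1 - i) * g s ^ i) * g y ^ i := by rw [← hsplit]
        _ = c i * g s ^ n * g y ^ i := by rw [← pow_add, ← pow_add, hpow]
        _ = g s ^ n * (c i * g y ^ i) := by ring
    rw [expand, heq, mul_zero]
  obtain ⟨w, hw⟩ := (IsLocalization.map_eq_zero_iff M _ _).mp key
  refine ⟨(w : Rb) * s, mul_mem w.2 hsM, ?_⟩
  refine ⟨n, hn, fun i => e i * (w : Rb) ^ (n - i),
    fun i hi => Ideal.mul_mem_right _ _ (he i hi), ?_⟩
  have h2 : (w : Rb) ^ (n - 1) * (w : Rb) = (w : Rb) ^ n := by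
    rw [← pow_succ]; congr 1; omega
  have hfinal : ((w : Rb) * s * y) ^ n
      + ∑ i ∈ Finset.range n, (e i * (w : Rb) ^ (n - i)) * ((w : Rb) * s * y) ^ i
      = (w : Rb) ^ (n - 1) * ((w : Rb) * ((s * y) ^ n
          + ∑ i ∈ Finset.range n, e i * (s * y) ^ i)) := by
    rw [mul_add, Finset.mul_sum, mul_add, Finset.mul_sum]
    congr 1
    · have h4 : ((w : Rb) * s * y) ^ n = (w : Rb) ^ n * (s * y) ^ n := by
        rw [mul_assoc, mul_pow]
      linear_combination h4 - (s * y) ^ n * h2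
    · refine Finset.sum_congr rfl fun i hi => ?_
      have hin : i < n := Finset.mem_range.mp hi
      have h1 : (w : Rb) ^ (n - i) * (w : Rb) ^ i = (w : Rb) ^ n := by
        rw [← pow_add]; congr 1; omega
      have h3 : ((w : Rb) * s * y) ^ i = (w : Rb) ^ i * (s * y) ^ i := by
        rw [mul_assoc, mul_pow]
      linear_combination (e i * (w : Rb) ^ (n - i)) * h3
        + (e i * (s * y) ^ i) * h1 - (e i * (s * y) ^ i) * h2
  rw [hfinal, hw, mul_zero]

/-- Local-global principle for integral closures of ideals. -/
lemma Ideal.intClosure_descend (J : Ideal Rb) (y : Rb)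
    (hy : ∀ (m : Ideal Rb) (hm : m.IsMaximal),
      algebraMap Rb (Localization (@Ideal.primeCompl _ _ m hm.isPrime)) y ∈
        (J.map (algebraMap Rb (Localization (@Ideal.primeCompl _ _ m hm.isPrime)))).intClosure) :
    y ∈ J.intClosure := by
  by_contra hyK
  have hL : (J.intClosureIdeal.colon (Ideal.span {y})) ≠ ⊤ := by
    intro ht
    exact hyK (by simpa using Ideal.mem_colon_span_singleton.mp (ht ▸ Submodule.mem_top :
      (1 : Rb) ∈ J.intClosureIdeal.colon (Ideal.span {y})))
  obtain ⟨m, hm, hle⟩ := Ideal.exists_le_maximal _ hL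
  obtain ⟨t, htM, hty⟩ := J.intClosure_clear y (@Ideal.primeCompl _ _ m hm.isPrime) (hy m hm)
  exact htM (hle (Ideal.mem_colon_span_singleton.mpr hty))

end Descent


set_option maxHeartbeats 2000000 in
set_option synthInstance.maxHeartbeats 2000000 in
/-- **Lemma (reduction to the normal case).**  Let `R` be a reduced Noetherian algebra over
an infinite field `k`, `I` an ideal of `R` and `x ∈ I`.  Write `R̄` for the integral closure
of `R` in its total ring of quotients.  If for every maximal ideal `m` of `R̄` the extension
of `\overline{I·R̄_m}` to `R̄_m/(x)R̄_m` equals the integral closure of the extension of `I`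
to `R̄_m/(x)R̄_m`, then the image of `\overline{I}` in `R/(x)` equals the integral closure
of the image ideal `I·(R/(x))`. -/
theorem specialization_intClosure_of_norm (k : Type*) [Field k] [Infinite k]
    (R : Type*) [CommRing R] [IsNoetherianRing R] [IsReduced R] [Algebra k R]
    (I : Ideal R) (x : R) (hx : x ∈ I)
    (h : ∀ (m : Ideal (integralClosure R (FractionRing R))) (hm : m.IsMaximal),
      letI φ := (algebraMap (integralClosure R (FractionRing R))
          (Localization (@Ideal.primeCompl _ _ m hm.isPrime))).comp
          (algebraMap R (integralClosure R (FractionRing R)))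
      letI := Ideal.Quotient.commRing (Ideal.span {φ x})
      (Ideal.Quotient.mk (Ideal.span {φ x})) '' (I.map φ).intClosure =
        ((I.map φ).map (Ideal.Quotient.mk (Ideal.span {φ x}))).intClosure) :
    (Ideal.Quotient.mk (Ideal.span {x})) '' I.intClosure =
      (I.map (Ideal.Quotient.mk (Ideal.span {x}))).intClosure := by
  classical
  set π := Ideal.Quotient.mk (Ideal.span {x}) with hπ
  apply Set.Subset.antisymm
  · rintro _ ⟨r, hr, rfl⟩
    exact I.intClosure_map π hr
  · intro yq hyq
    obtain ⟨r, rfl⟩ := Ideal.Quotient.mk_surjective yq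
    refine ⟨r, ?_, rfl⟩
    set ρ : R →+* ↥(integralClosure R (FractionRing R)) :=
      algebraMap R ↥(integralClosure R (FractionRing R)) with hρ
    have hρinj : Function.Injective ρ := by
      intro a b hab
      have h2 := congrArg (Subtype.val) hab
      exact IsFractionRing.injective R (FractionRing R) h2
    have hρint : ρ.IsIntegral := fun z => integralClosure.isIntegral z
    apply Ideal.intClosure_contract ρ hρinj hρint
    apply Ideal.intClosure_descend (I.map ρ) (ρ r)
    intro m hm
    set g1 := algebraMap ↥(integralClosure R (FractionRing R))
      (Localization (@Ideal.primeCompl _ _ m hm.isPrime)) with hg1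
    set φ : R →+* Localization (@Ideal.primeCompl _ _ m hm.isPrime) := g1.comp ρ with hφ
    have hmap : (I.map ρ).map g1 = I.map φ := Ideal.map_map ρ g1
    rw [hmap]
    set mk' := Ideal.Quotient.mk (Ideal.span {φ x}) with hmk'
    have hh : mk' '' (I.map φ).intClosure = ((I.map φ).map mk').intClosure := h m hm
    have hker : ∀ a ∈ Ideal.span {x}, (mk'.comp φ) a = 0 := by
      intro a ha
      have h1 : φ a ∈ Ideal.span {φ x} := by
        have h2 : φ a ∈ (Ideal.span {x}).map φ := Ideal.mem_map_of_mem φ ha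
        rwa [Ideal.map_span, Set.image_singleton] at h2
      show mk' (φ a) = 0
      rwa [Ideal.Quotient.eq_zero_iff_mem]
    set ψ := Ideal.Quotient.lift (Ideal.span {x}) (mk'.comp φ) hker with hψ
    have hcomp : ψ.comp π = mk'.comp φ := RingHom.ext fun a => by
      show ψ (π a) = (mk'.comp φ) a
      exact Ideal.Quotient.lift_mk _ _ _
    have h1 : ψ (π r) ∈ ((I.map π).map ψ).intClosure := (I.map π).intClosure_map ψ hyq
    rw [Ideal.map_map π ψ, hcomp, ← Ideal.map_map φ mk'] at h1
    have h2 : ψ (π r) = mk' (φ r) := Ideal.Quotient.lift_mk _ _ _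
    rw [h2, ← hh] at h1
    obtain ⟨sElt, hs1, hs2⟩ := h1
    have hsub : φ r - sElt ∈ Ideal.span {φ x} := by
      exact Ideal.Quotient.eq.mp hs2.symm
    have hspan_le : Ideal.span {φ x} ≤ I.map φ := by
      rw [Ideal.span_le, Set.singleton_subset_iff]
      exact Ideal.mem_map_of_mem φ hx
    have hfr : φ r = sElt + (φ r - sElt) := by ring
    show φ r ∈ (I.map φ).intClosure
    rw [hfr]
    exact (I.map φ).intClosure_add_mem hs1
      ((I.map φ).mem_intClosure_of_mem (hspan_le hsub))
end

section
/- Let R = ℚ[t]_{(t)} be the localization of the polynomial ring ℚ[t] at the prime ideal (t), and let I = (t²). Then for any generator x of I (in particular for a general element x of I, since any such element is a unit multiple of t²), the image of the integral closure \overline{I} in R/(x) is the zero ideal, while the residue class of t lies in the integral closure of the zero ideal of R/(x); hence \overline{I}/(x) ⊊ \overline{I/(x)}. In particular, the hypothesis height I ≥ 2 in the main theorem cannot be dropped: specialization by a general element is not compatible with integral closure for this height-1 ideal. -/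
instance : (Ideal.span {(Polynomial.X : Polynomial ℚ)}).IsPrime :=
  (Ideal.span_singleton_prime Polynomial.X_ne_zero).mpr Polynomial.prime_X

noncomputable abbrev RlocX := Localization.AtPrime (Ideal.span {(Polynomial.X : Polynomial ℚ)})

noncomputable abbrev ttX : RlocX := algebraMap (Polynomial ℚ) RlocX Polynomial.X

lemma RlocX.dvr : IsDiscreteValuationRing RlocX :=
  IsLocalization.AtPrime.isDiscreteValuationRing_of_dedekind_domain (Polynomial ℚ)
    (fun h => Polynomial.X_ne_zero (Ideal.span_singleton_eq_bot.mp h)) RlocX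

lemma ttX_irred : Irreducible ttX := by
  have := RlocX.dvr
  rw [IsDiscreteValuationRing.irreducible_iff_uniformizer,
    ← Localization.AtPrime.map_eq_maximalIdeal, Ideal.map_span, Set.image_singleton]

lemma zero_mem_intClosure {R : Type*} [CommRing R] (I : Ideal R) : 0 ∈ I.intClosure :=
  ⟨1, one_pos, 0, fun i _ => zero_mem _, by simp⟩

lemma intClosure_sub : (Ideal.span {ttX ^ 2}).intClosure ⊆ (Ideal.span {ttX ^ 2} : Ideal RlocX) := by
  have hirr := ttX_irred
  have ht0 : (ttX : RlocX) ≠ 0 := hirr.ne_zero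
  have := RlocX.dvr
  rintro r ⟨n, hn, c, hc, heq⟩
  rcases eq_or_ne r 0 with rfl | hr
  · exact zero_mem _
  obtain ⟨k, u, rfl⟩ := IsDiscreteValuationRing.eq_unit_mul_pow_irreducible hr hirr
  rcases le_or_gt 2 k with hk | hk
  · rw [SetLike.mem_coe, Ideal.mem_span_singleton]
    exact Dvd.dvd.mul_left (pow_dvd_pow _ hk) _
  exfalso
  have hdvd : (ttX : RlocX) ^ (k * n + 1) ∣ ∑ i ∈ Finset.range n, c i * (↑u * ttX ^ k) ^ i := by
    apply Finset.dvd_sum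
    intro i hi
    rw [Finset.mem_range] at hi
    have h1 : (ttX : RlocX) ^ (2 * (n - i)) ∣ c i := by
      have h := hc i hi
      rw [Ideal.span_singleton_pow, Ideal.mem_span_singleton, ← pow_mul] at h
      exact h
    have h2 : (ttX : RlocX) ^ (k * i) ∣ (↑u * ttX ^ k) ^ i := by
      rw [mul_pow, ← pow_mul]
      exact Dvd.dvd.mul_left dvd_rfl _
    have h12 := mul_dvd_mul h1 h2
    rw [← pow_add] at h12
    exact dvd_trans (pow_dvd_pow _ (by interval_cases k <;> omega)) h12
  have h3 : (ttX : RlocX) ^ (k * n + 1) ∣ (↑u : RlocX) ^ n * ttX ^ (k * n) := by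
    have e : ((↑u * ttX ^ k : RlocX)) ^ n = ↑u ^ n * ttX ^ (k * n) := by
      rw [mul_pow, ← pow_mul]
    rw [← e, eq_neg_of_add_eq_zero_left heq]
    exact dvd_neg.mpr hdvd
  have h4 : (ttX : RlocX) ∣ (↑u : RlocX) ^ n := by
    rw [pow_succ, mul_comm ((↑u : RlocX) ^ n) _] at h3
    exact (mul_dvd_mul_iff_left (pow_ne_zero _ ht0)).mp h3
  exact hirr.not_isUnit (isUnit_of_dvd_unit h4 (u.isUnit.pow n))

/-- **Example (height 1 is necessary).**  Let `R = ℚ[t]_(t)` and `I = (t²)`.  For any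
generator `x` of `I` (in particular for a general element of `I`, which is a unit multiple
of `t²`): the image of the integral closure `\overline{I}` in `R/(x)` is the zero ideal,
while the residue class of `t` is a nonzero element of the integral closure
`\overline{I·(R/(x))}` of the image ideal; hence `\overline{I}/(x) ⊊ \overline{I/(x)}`,
so specialization by a general element is not compatible with integral closure for this
height-one ideal. -/
theorem intClosure_specialization_counterexample :
    ∀ x : Localization.AtPrime (Ideal.span {(Polynomial.X : Polynomial ℚ)}),
      Ideal.span {x} =
        Ideal.span {(algebraMap (Polynomial ℚ)
          (Localization.AtPrime (Ideal.span {(Polynomial.X : Polynomial ℚ)}))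
          Polynomial.X) ^ 2} →
      ((Ideal.Quotient.mk (Ideal.span {x})) ''
          (Ideal.span {(algebraMap (Polynomial ℚ)
            (Localization.AtPrime (Ideal.span {(Polynomial.X : Polynomial ℚ)}))
            Polynomial.X) ^ 2}).intClosure = {0}) ∧
      (Ideal.Quotient.mk (Ideal.span {x})
          (algebraMap (Polynomial ℚ)
            (Localization.AtPrime (Ideal.span {(Polynomial.X : Polynomial ℚ)}))
            Polynomial.X) ∈
        ((Ideal.span {(algebraMap (Polynomial ℚ)
            (Localization.AtPrime (Ideal.span {(Polynomial.X : Polynomial ℚ)}))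
            Polynomial.X) ^ 2}).map (Ideal.Quotient.mk (Ideal.span {x}))).intClosure) ∧
      (Ideal.Quotient.mk (Ideal.span {x})
          (algebraMap (Polynomial ℚ)
            (Localization.AtPrime (Ideal.span {(Polynomial.X : Polynomial ℚ)}))
            Polynomial.X) ≠ 0) ∧
      ((Ideal.Quotient.mk (Ideal.span {x})) ''
          (Ideal.span {(algebraMap (Polynomial ℚ)
            (Localization.AtPrime (Ideal.span {(Polynomial.X : Polynomial ℚ)}))
            Polynomial.X) ^ 2}).intClosure ⊂
        ((Ideal.span {(algebraMap (Polynomial ℚ)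
            (Localization.AtPrime (Ideal.span {(Polynomial.X : Polynomial ℚ)}))
            Polynomial.X) ^ 2}).map (Ideal.Quotient.mk (Ideal.span {x}))).intClosure) := by
  intro x hx
  have ht0 : (ttX : RlocX) ≠ 0 := ttX_irred.ne_zero
  have hmk2 : (Ideal.Quotient.mk (Ideal.span {x})) ttX ^ 2 = 0 := by
    rw [← map_pow, Ideal.Quotient.eq_zero_iff_mem, hx]
    exact Ideal.mem_span_singleton_self _
  have hne : (Ideal.Quotient.mk (Ideal.span {x})) ttX ≠ 0 := by
    rw [Ne, Ideal.Quotient.eq_zero_iff_mem, hx, Ideal.mem_span_singleton]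
    intro h
    rw [pow_two] at h
    obtain ⟨s, hs⟩ := h
    have h1 : (1 : RlocX) = ttX * s := by
      apply mul_left_cancel₀ ht0
      rw [mul_one, ← mul_assoc]; exact hs
    exact ttX_irred.not_isUnit (IsUnit.of_mul_eq_one (a := ttX) s h1.symm)
  have himg : (Ideal.Quotient.mk (Ideal.span {x})) '' (Ideal.span {ttX ^ 2}).intClosure = {0} := by
    apply Set.eq_singleton_iff_unique_mem.mpr
    constructor
    · exact ⟨0, zero_mem_intClosure _, map_zero _⟩
    · rintro _ ⟨r, hr, rfl⟩
      rw [Ideal.Quotient.eq_zero_iff_mem, hx]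
      exact intClosure_sub hr
  have hmem : (Ideal.Quotient.mk (Ideal.span {x})) ttX ∈
      ((Ideal.span {ttX ^ 2}).map (Ideal.Quotient.mk (Ideal.span {x}))).intClosure := by
    refine ⟨2, two_pos, 0, fun i _ => zero_mem _, ?_⟩
    simp only [Pi.zero_apply, zero_mul, Finset.sum_const_zero, add_zero, hmk2]
  refine ⟨himg, hmem, hne, ?_⟩
  rw [himg, Set.ssubset_def]
  exact ⟨Set.singleton_subset_iff.mpr (zero_mem_intClosure _), fun h => hne (h hmem)⟩
end
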